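/- arXiv:2008.07851 — 3 statements merged into one kernel-verified Lean document; each statement's English description precedes it below -/
import Mathlib

section
/- Let p > 1 be a real number and let X and Y be uniformly convex real Banach spaces. Let W := X × Y be equipped with the norm ‖w‖_W = (‖u‖_X^p + ‖v‖_Y^p)^{1/p} for w = (u, v) ∈ W. Then W is uniformly convex. -/
open scoped ENNReal
open Filter Topology Set


/-- Sequential criterion for uniform convexity. -/
private lemma ucs_of_seq {E : Type*} [SeminormedAddCommGroup E]
    (h : ∀ x y : ℕ → E, (∀ n, ‖x n‖ = 1) → (∀ n, ‖y n‖ = 1) →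
      Tendsto (fun n => ‖x n + y n‖) atTop (𝓝 2) →
      Tendsto (fun n => ‖x n - y n‖) atTop (𝓝 0)) :
    UniformConvexSpace E := by
  refine ⟨fun ε hε => ?_⟩
  by_contra hc
  push_neg at hc
  choose! x hx y hy hxy hs using hc
  set u : ℕ → E := fun n => x (1 / (n + 1)) with hu
  set v : ℕ → E := fun n => y (1 / (n + 1)) with hv
  have hpos : ∀ n : ℕ, (0 : ℝ) < 1 / (n + 1) := fun n => by positivity
  have hu1 : ∀ n, ‖u n‖ = 1 := fun n => hx _ (hpos n)
  have hv1 : ∀ n, ‖v n‖ = 1 := fun n => hy _ (hpos n)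
  have hsum : Tendsto (fun n => ‖u n + v n‖) atTop (𝓝 2) := by
    have hlow : Tendsto (fun n : ℕ => 2 - 1 / ((n : ℝ) + 1)) atTop (𝓝 2) := by
      have : Tendsto (fun n : ℕ => 1 / ((n : ℝ) + 1)) atTop (𝓝 0) :=
        tendsto_one_div_add_atTop_nhds_zero_nat
      simpa using tendsto_const_nhds.sub this
    refine tendsto_of_tendsto_of_tendsto_of_le_of_le hlow tendsto_const_nhds
      (fun n => (hs _ (hpos n)).le) (fun n => ?_)
    calc ‖u n + v n‖ ≤ ‖u n‖ + ‖v n‖ := norm_add_le _ _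
    _ = 2 := by rw [hu1 n, hv1 n]; norm_num
  have hdiff := h u v hu1 hv1 hsum
  have := hdiff.eventually_lt_const hε
  rcases this.exists with ⟨n, hn⟩
  exact absurd (hxy _ (hpos n)) (not_le.2 hn)

/-- In a uniformly convex space, sequences in the unit ball whose sum has norm tending to 2
have difference tending to 0. -/
private lemma seq_tendsto_of_uc {E : Type*} [NormedAddCommGroup E] [NormedSpace ℝ E]
    [UniformConvexSpace E] {x y : ℕ → E}
    (hx : ∀ n, ‖x n‖ ≤ 1) (hy : ∀ n, ‖y n‖ ≤ 1)
    (h : Tendsto (fun n => ‖x n + y n‖) atTop (𝓝 2)) :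
    Tendsto (fun n => ‖x n - y n‖) atTop (𝓝 0) := by
  rw [Metric.tendsto_atTop]
  intro ε hε
  obtain ⟨δ, hδ, hball⟩ := exists_forall_closed_ball_dist_add_le_two_sub E hε
  have hev : ∀ᶠ n in atTop, 2 - δ < ‖x n + y n‖ :=
    h.eventually_const_lt (by linarith)
  rcases hev.exists_forall_of_atTop with ⟨N, hN⟩
  refine ⟨N, fun n hn => ?_⟩
  rw [Real.dist_eq, sub_zero, abs_of_nonneg (norm_nonneg _)]
  by_contra hle
  push_neg at hle
  exact absurd (hball (hx n) (hy n) hle) (not_le.2 (hN n hn))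



private lemma rpow_add_le_aux {q a b : ℝ} (hq : 1 < q) (ha : 0 ≤ a) (hb : 0 ≤ b) :
    (a + b) ^ q ≤ 2 ^ (q - 1) * (a ^ q + b ^ q) := by
  have h := (strictConvexOn_rpow hq).convexOn.2 (mem_Ici.2 ha) (mem_Ici.2 hb)
    (by norm_num : (0:ℝ) ≤ 1/2) (by norm_num : (0:ℝ) ≤ 1/2) (by norm_num)
  simp only [smul_eq_mul] at h
  have h2 : (a + b) ^ q = 2 ^ q * (1/2 * a + 1/2 * b) ^ q := by
    rw [← Real.mul_rpow (by norm_num) (by linarith)]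
    ring_nf
  have h3 : (2:ℝ) ^ (q - 1) = 2 ^ q / 2 := by
    rw [Real.rpow_sub (by norm_num), Real.rpow_one]
  have h4 : (0:ℝ) < 2 ^ q := Real.rpow_pos_of_pos (by norm_num) q
  rw [h2, h3]
  calc 2 ^ q * (1/2 * a + 1/2 * b) ^ q ≤ 2 ^ q * (1/2 * a ^ q + 1/2 * b ^ q) := by
        apply mul_le_mul_of_nonneg_left h h4.le
  _ = 2 ^ q / 2 * (a ^ q + b ^ q) := by ring

private lemma eq_of_rpow_add_eq {q a b : ℝ} (hq : 1 < q) (ha : 0 ≤ a) (hb : 0 ≤ b)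
    (h : (a + b) ^ q = 2 ^ (q - 1) * (a ^ q + b ^ q)) : a = b := by
  by_contra hne
  have hs := (strictConvexOn_rpow hq).2 (mem_Ici.2 ha) (mem_Ici.2 hb) hne
    (by norm_num : (0:ℝ) < 1/2) (by norm_num : (0:ℝ) < 1/2) (by norm_num)
  simp only [smul_eq_mul] at hs
  have h2 : (a + b) ^ q = 2 ^ q * (1/2 * a + 1/2 * b) ^ q := by
    rw [← Real.mul_rpow (by norm_num) (by linarith)]
    ring_nf
  have h3 : (2:ℝ) ^ (q - 1) = 2 ^ q / 2 := by
    rw [Real.rpow_sub (by norm_num), Real.rpow_one]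
  have h4 : (0:ℝ) < 2 ^ q := Real.rpow_pos_of_pos (by norm_num) q
  rw [h2, h3] at h
  nlinarith [mul_lt_mul_of_pos_left hs h4]

private lemma le_of_rpow_le {q a b : ℝ} (hq : 0 < q) (ha : 0 ≤ a) (hb : 0 ≤ b)
    (h : a ^ q ≤ b ^ q) : a ≤ b := by
  by_contra hlt
  push_neg at hlt
  exact absurd h (not_le.2 (Real.rpow_lt_rpow hb hlt hq))

private lemma comp_tendsto {E : Type*} [NormedAddCommGroup E] [NormedSpace ℝ E]
    [UniformConvexSpace E] {x x' : ℕ → E} {A : ℝ}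
    (hA : Tendsto (fun n => ‖x n‖) atTop (𝓝 A))
    (hA' : Tendsto (fun n => ‖x' n‖) atTop (𝓝 A))
    (hC : Tendsto (fun n => ‖x n + x' n‖) atTop (𝓝 (2 * A))) :
    Tendsto (fun n => ‖x n - x' n‖) atTop (𝓝 0) := by
  have hA0 : 0 ≤ A := le_of_tendsto_of_tendsto' tendsto_const_nhds hA fun n => norm_nonneg _
  rcases eq_or_lt_of_le hA0 with h0 | hpos
  · have hsum : Tendsto (fun n => ‖x n‖ + ‖x' n‖) atTop (𝓝 0) := by
      have := hA.add hA'
      rwa [← h0, add_zero] at this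
    exact tendsto_of_tendsto_of_tendsto_of_le_of_le tendsto_const_nhds hsum
      (fun n => norm_nonneg _) (fun n => norm_sub_le _ _)
  · set u : ℕ → E := fun n => ‖x n‖⁻¹ • x n with hu
    set v : ℕ → E := fun n => ‖x' n‖⁻¹ • x' n with hv
    have hu1 : ∀ n, ‖u n‖ ≤ 1 := by
      intro n
      rcases eq_or_ne (x n) 0 with h | h
      · simp [hu, h]
      · rw [hu, norm_smul, norm_inv, norm_norm, inv_mul_cancel₀ (norm_ne_zero_iff.2 h)]
    have hv1 : ∀ n, ‖v n‖ ≤ 1 := by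
      intro n
      rcases eq_or_ne (x' n) 0 with h | h
      · simp [hv, h]
      · rw [hv, norm_smul, norm_inv, norm_norm, inv_mul_cancel₀ (norm_ne_zero_iff.2 h)]
    have hxu : ∀ n, ‖x n‖ • u n = x n := by
      intro n
      rcases eq_or_ne (x n) 0 with h | h
      · simp [hu, h]
      · exact smul_inv_smul₀ (norm_ne_zero_iff.2 h) _
    have hxv : ∀ n, ‖x' n‖ • v n = x' n := by
      intro n
      rcases eq_or_ne (x' n) 0 with h | h
      · simp [hv, h]
      · exact smul_inv_smul₀ (norm_ne_zero_iff.2 h) _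
    have hAinv : A ≠ 0 := hpos.ne'
    have hinv : Tendsto (fun n => ‖x n‖⁻¹) atTop (𝓝 A⁻¹) := hA.inv₀ hAinv
    have hinv' : Tendsto (fun n => ‖x' n‖⁻¹) atTop (𝓝 A⁻¹) := hA'.inv₀ hAinv
    have hmain : Tendsto (fun n => A⁻¹ * ‖x n + x' n‖) atTop (𝓝 2) := by
      have := hC.const_mul A⁻¹
      rwa [show A⁻¹ * (2 * A) = 2 by field_simp] at this
    have hdist : Tendsto (fun n => dist (A⁻¹ * ‖x n + x' n‖) ‖u n + v n‖) atTop (𝓝 0) := by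
      have hb : ∀ n, dist (A⁻¹ * ‖x n + x' n‖) ‖u n + v n‖ ≤
          |‖x n‖⁻¹ - A⁻¹| * ‖x n‖ + |‖x' n‖⁻¹ - A⁻¹| * ‖x' n‖ := by
        intro n
        have h1 : A⁻¹ * ‖x n + x' n‖ = ‖A⁻¹ • (x n + x' n)‖ := by
          rw [norm_smul, Real.norm_eq_abs, abs_of_nonneg (inv_nonneg.2 hA0)]
        have h2 : A⁻¹ • (x n + x' n) - (u n + v n) =
            (A⁻¹ - ‖x n‖⁻¹) • x n + (A⁻¹ - ‖x' n‖⁻¹) • x' n := by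
          simp only [hu, hv, smul_add, sub_smul]
          abel
        calc dist (A⁻¹ * ‖x n + x' n‖) ‖u n + v n‖
            = |‖A⁻¹ • (x n + x' n)‖ - ‖u n + v n‖| := by rw [Real.dist_eq, h1]
        _ ≤ ‖A⁻¹ • (x n + x' n) - (u n + v n)‖ := abs_norm_sub_norm_le _ _
        _ = ‖(A⁻¹ - ‖x n‖⁻¹) • x n + (A⁻¹ - ‖x' n‖⁻¹) • x' n‖ := by rw [h2]
        _ ≤ ‖(A⁻¹ - ‖x n‖⁻¹) • x n‖ + ‖(A⁻¹ - ‖x' n‖⁻¹) • x' n‖ := norm_add_le _ _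
        _ = |‖x n‖⁻¹ - A⁻¹| * ‖x n‖ + |‖x' n‖⁻¹ - A⁻¹| * ‖x' n‖ := by
            rw [norm_smul, norm_smul, Real.norm_eq_abs, Real.norm_eq_abs,
              abs_sub_comm A⁻¹, abs_sub_comm A⁻¹]
      have hrhs : Tendsto (fun n => |‖x n‖⁻¹ - A⁻¹| * ‖x n‖ + |‖x' n‖⁻¹ - A⁻¹| * ‖x' n‖)
          atTop (𝓝 0) := by
        have hc : Tendsto (fun _ : ℕ => A⁻¹) atTop (𝓝 A⁻¹) := tendsto_const_nhds
        have h1 := ((hinv.sub hc).abs.mul hA).add ((hinv'.sub hc).abs.mul hA')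
        simpa using h1
      exact tendsto_of_tendsto_of_tendsto_of_le_of_le tendsto_const_nhds hrhs
        (fun n => dist_nonneg) hb
    have hkey : Tendsto (fun n => ‖u n + v n‖) atTop (𝓝 2) := hmain.congr_dist hdist
    have hd := seq_tendsto_of_uc hu1 hv1 hkey
    have hid : ∀ n, x n - x' n = ‖x n‖ • (u n - v n) + (‖x n‖ - ‖x' n‖) • v n := by
      intro n
      rw [smul_sub, sub_smul, hxu n, hxv n]
      abel
    have hb2 : ∀ n, ‖x n - x' n‖ ≤ ‖x n‖ * ‖u n - v n‖ + |‖x n‖ - ‖x' n‖| * 1 := by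
      intro n
      calc ‖x n - x' n‖ ≤ ‖‖x n‖ • (u n - v n)‖ + ‖(‖x n‖ - ‖x' n‖) • v n‖ := by
            rw [hid n]; exact norm_add_le _ _
      _ = ‖x n‖ * ‖u n - v n‖ + |‖x n‖ - ‖x' n‖| * ‖v n‖ := by
          rw [norm_smul, norm_smul, Real.norm_eq_abs, Real.norm_eq_abs,
            abs_of_nonneg (norm_nonneg _)]
      _ ≤ ‖x n‖ * ‖u n - v n‖ + |‖x n‖ - ‖x' n‖| * 1 := by
          gcongr
          exact hv1 n
    have hrhs2 : Tendsto (fun n => ‖x n‖ * ‖u n - v n‖ + |‖x n‖ - ‖x' n‖| * 1)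
        atTop (𝓝 0) := by
      have h1 := (hA.mul hd).add (((hA.sub hA').abs).mul (tendsto_const_nhds : Tendsto (fun _ : ℕ => (1:ℝ)) atTop (𝓝 1)))
      simpa using h1
    exact tendsto_of_tendsto_of_tendsto_of_le_of_le tendsto_const_nhds hrhs2
      (fun n => norm_nonneg _) hb2



/-- If `X` and `Y` are uniformly convex real Banach spaces and `p > 1` is finite,
then `W = X × Y` endowed with the norm `‖(u, v)‖_W = (‖u‖_X^p + ‖v‖_Y^p)^{1/p}`
(the `L^p` product, `WithLp p (X × Y)`) is uniformly convex. -/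
theorem stmt_11 {X Y : Type*} [NormedAddCommGroup X] [NormedSpace ℝ X] [CompleteSpace X]
    [NormedAddCommGroup Y] [NormedSpace ℝ Y] [CompleteSpace Y]
    [UniformConvexSpace X] [UniformConvexSpace Y]
    (p : ℝ≥0∞) [Fact (1 ≤ p)] (hp : 1 < p) (hp' : p ≠ ⊤) :
    UniformConvexSpace (WithLp p (X × Y)) := by
  set q := p.toReal with hq
  have hq1 : 1 < q := by
    have := (ENNReal.toReal_lt_toReal ENNReal.one_ne_top hp').2 hp
    simpa using this
  have hq0 : 0 < q := by linarith
  have hnorm : ∀ z : WithLp p (X × Y), ‖z.fst‖ ^ q + ‖z.snd‖ ^ q = ‖z‖ ^ q := by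
    intro z
    rw [WithLp.prod_norm_eq_add hq0, ← Real.rpow_mul (by positivity),
      one_div_mul_cancel hq0.ne', Real.rpow_one]
  apply ucs_of_seq
  intro w w' hw hw' hsum
  apply tendsto_of_subseq_tendsto
  intro ns hns
  -- bound components
  have hf1 : ∀ n, ‖(w n).fst‖ ^ q + ‖(w n).snd‖ ^ q = 1 := fun n => by
    rw [hnorm, hw n, Real.one_rpow]
  have hf1' : ∀ n, ‖(w' n).fst‖ ^ q + ‖(w' n).snd‖ ^ q = 1 := fun n => by
    rw [hnorm, hw' n, Real.one_rpow]
  -- the six scalar sequences, bundled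
  set F : ℕ → (ℝ × ℝ) × (ℝ × ℝ) × ℝ × ℝ := fun n =>
    ((‖(w (ns n)).fst‖, ‖(w (ns n)).snd‖), (‖(w' (ns n)).fst‖, ‖(w' (ns n)).snd‖),
      ‖(w (ns n) + w' (ns n)).fst‖, ‖(w (ns n) + w' (ns n)).snd‖) with hF
  have hcle : ∀ z : WithLp p (X × Y), ‖z.fst‖ ≤ ‖z‖ ∧ ‖z.snd‖ ≤ ‖z‖ := by
    intro z
    constructor <;> {
      by_contra hlt
      push_neg at hlt
      have h2 := Real.rpow_lt_rpow (norm_nonneg _) hlt hq0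
      nlinarith [hnorm z, Real.rpow_nonneg (norm_nonneg z.fst) q,
        Real.rpow_nonneg (norm_nonneg z.snd) q] }
  have hmem : ∀ n, F n ∈ Metric.closedBall (0 : (ℝ × ℝ) × (ℝ × ℝ) × ℝ × ℝ) 2 := by
    intro n
    rw [Metric.mem_closedBall, dist_zero_right]
    have b1 := hcle (w (ns n))
    have b2 := hcle (w' (ns n))
    have b3 := hcle (w (ns n) + w' (ns n))
    have n1 : ‖w (ns n)‖ = 1 := hw _
    have n2 : ‖w' (ns n)‖ = 1 := hw' _
    have n3 : ‖w (ns n) + w' (ns n)‖ ≤ 2 := by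
      calc ‖w (ns n) + w' (ns n)‖ ≤ ‖w (ns n)‖ + ‖w' (ns n)‖ := norm_add_le _ _
      _ = 2 := by rw [n1, n2]; norm_num
    simp only [hF, Prod.norm_def, norm_norm, max_le_iff]
    refine ⟨⟨?_, ?_⟩, ⟨?_, ?_⟩, ?_, ?_⟩ <;> linarith [b1.1, b1.2, b2.1, b2.2, b3.1, b3.2]
  obtain ⟨L, -, φ, hφ, hL⟩ := tendsto_subseq_of_bounded Metric.isBounded_closedBall hmem
  obtain ⟨⟨A, B⟩, ⟨A', B'⟩, C, D⟩ := L
  set m : ℕ → ℕ := fun n => ns (φ n) with hm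
  have hmt : Tendsto m atTop atTop := hns.comp hφ.tendsto_atTop
  -- componentwise limits
  have h12 := (Prod.tendsto_iff _ _).1 hL
  have h34 := (Prod.tendsto_iff _ _).1 h12.2
  have h56 := (Prod.tendsto_iff _ _).1 h34.2
  have hA : Tendsto (fun n => ‖(w (m n)).fst‖) atTop (𝓝 A) :=
    ((Prod.tendsto_iff _ _).1 h12.1).1
  have hB : Tendsto (fun n => ‖(w (m n)).snd‖) atTop (𝓝 B) :=
    ((Prod.tendsto_iff _ _).1 h12.1).2
  have hA' : Tendsto (fun n => ‖(w' (m n)).fst‖) atTop (𝓝 A') :=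
    ((Prod.tendsto_iff _ _).1 h34.1).1
  have hB' : Tendsto (fun n => ‖(w' (m n)).snd‖) atTop (𝓝 B') :=
    ((Prod.tendsto_iff _ _).1 h34.1).2
  have hC : Tendsto (fun n => ‖(w (m n) + w' (m n)).fst‖) atTop (𝓝 C) := h56.1
  have hD : Tendsto (fun n => ‖(w (m n) + w' (m n)).snd‖) atTop (𝓝 D) := h56.2
  -- nonnegativity of limits
  have hA0 : 0 ≤ A := le_of_tendsto_of_tendsto' tendsto_const_nhds hA fun n => norm_nonneg _
  have hB0 : 0 ≤ B := le_of_tendsto_of_tendsto' tendsto_const_nhds hB fun n => norm_nonneg _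
  have hA'0 : 0 ≤ A' := le_of_tendsto_of_tendsto' tendsto_const_nhds hA' fun n => norm_nonneg _
  have hB'0 : 0 ≤ B' := le_of_tendsto_of_tendsto' tendsto_const_nhds hB' fun n => norm_nonneg _
  have hC0 : 0 ≤ C := le_of_tendsto_of_tendsto' tendsto_const_nhds hC fun n => norm_nonneg _
  have hD0 : 0 ≤ D := le_of_tendsto_of_tendsto' tendsto_const_nhds hD fun n => norm_nonneg _
  -- limit identities
  have hABone : A ^ q + B ^ q = 1 := by
    exact tendsto_nhds_unique
      ((hA.rpow_const (Or.inr hq0.le)).add (hB.rpow_const (Or.inr hq0.le)))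
      ((tendsto_const_nhds (x := (1:ℝ)) (f := atTop)).congr fun n => (hf1 (m n)).symm)
  have hA'B'one : A' ^ q + B' ^ q = 1 := by
    exact tendsto_nhds_unique
      ((hA'.rpow_const (Or.inr hq0.le)).add (hB'.rpow_const (Or.inr hq0.le)))
      ((tendsto_const_nhds (x := (1:ℝ)) (f := atTop)).congr fun n => (hf1' (m n)).symm)
  have hCD : C ^ q + D ^ q = 2 ^ q := by
    have hsum' : Tendsto (fun n => ‖w (m n) + w' (m n)‖ ^ q) atTop (𝓝 (2 ^ q)) :=
      (hsum.comp hmt).rpow_const (Or.inr hq0.le)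
    refine tendsto_nhds_unique ?_ (hsum'.congr fun n => (hnorm _).symm)
    exact (hC.rpow_const (Or.inr hq0.le)).add (hD.rpow_const (Or.inr hq0.le))
  have hCle : C ≤ A + A' :=
    le_of_tendsto_of_tendsto' hC (hA.add hA') fun n => norm_add_le _ _
  have hDle : D ≤ B + B' :=
    le_of_tendsto_of_tendsto' hD (hB.add hB') fun n => norm_add_le _ _
  -- algebraic consequences
  have e1 : C ^ q ≤ (A + A') ^ q := Real.rpow_le_rpow hC0 hCle hq0.le
  have e2 : D ^ q ≤ (B + B') ^ q := Real.rpow_le_rpow hD0 hDle hq0.le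
  have e3 : (A + A') ^ q ≤ 2 ^ (q - 1) * (A ^ q + A' ^ q) := rpow_add_le_aux hq1 hA0 hA'0
  have e4 : (B + B') ^ q ≤ 2 ^ (q - 1) * (B ^ q + B' ^ q) := rpow_add_le_aux hq1 hB0 hB'0
  have e5 : 2 ^ (q - 1) * (A ^ q + A' ^ q) + 2 ^ (q - 1) * (B ^ q + B' ^ q) = 2 ^ q := by
    have h2 : (2:ℝ) ^ (q - 1) = 2 ^ q / 2 := by
      rw [Real.rpow_sub (by norm_num), Real.rpow_one]
    have h6 : A ^ q + A' ^ q + (B ^ q + B' ^ q) = 2 := by linarith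
    rw [h2]
    linear_combination (2 ^ q / 2) * h6
  have eAA : (A + A') ^ q = 2 ^ (q - 1) * (A ^ q + A' ^ q) := by linarith
  have eBB : (B + B') ^ q = 2 ^ (q - 1) * (B ^ q + B' ^ q) := by linarith
  have hAA' : A = A' := eq_of_rpow_add_eq hq1 hA0 hA'0 eAA
  have hBB' : B = B' := eq_of_rpow_add_eq hq1 hB0 hB'0 eBB
  have hCeq : C = A + A' := by
    rcases lt_or_eq_of_le hCle with h | h
    · exfalso
      have := Real.rpow_lt_rpow hC0 h hq0
      linarith
    · exact h
  have hDeq : D = B + B' := by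
    rcases lt_or_eq_of_le hDle with h | h
    · exfalso
      have := Real.rpow_lt_rpow hD0 h hq0
      linarith
    · exact h
  -- apply component convergence
  have hfd : Tendsto (fun n => ‖(w (m n)).fst - (w' (m n)).fst‖) atTop (𝓝 0) := by
    refine comp_tendsto hA (hAA' ▸ hA') ?_
    have : C = 2 * A := by rw [hCeq, ← hAA']; ring
    exact this ▸ hC
  have hsd : Tendsto (fun n => ‖(w (m n)).snd - (w' (m n)).snd‖) atTop (𝓝 0) := by
    refine comp_tendsto hB (hBB' ▸ hB') ?_
    have : D = 2 * B := by rw [hDeq, ← hBB']; ring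
    exact this ▸ hD
  refine ⟨φ, ?_⟩
  have hfinal : Tendsto
      (fun n => (‖(w (m n)).fst - (w' (m n)).fst‖ ^ q + ‖(w (m n)).snd - (w' (m n)).snd‖ ^ q)
        ^ (1 / q)) atTop (𝓝 (((0:ℝ) ^ q + (0:ℝ) ^ q) ^ (1 / q))) := by
    exact ((hfd.rpow_const (Or.inr hq0.le)).add (hsd.rpow_const (Or.inr hq0.le))).rpow_const
      (Or.inr (by positivity))
  have hz : (((0:ℝ) ^ q + (0:ℝ) ^ q) ^ (1 / q)) = 0 := by
    rw [Real.zero_rpow hq0.ne', add_zero, Real.zero_rpow (by positivity : (1:ℝ)/q ≠ 0)]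
  rw [hz] at hfinal
  exact hfinal.congr fun n => (WithLp.prod_norm_eq_add hq0 _).symm
end

section
/- Let E be a real uniformly convex Banach space, p > 1 a real number, and r > 0; set B_r(0) := {x ∈ E : ‖x‖ ≤ r}. Then there exists a continuous, strictly increasing, convex function g : [0,∞) → [0,∞) with g(0) = 0 such that for every x, y ∈ B_r(0) and every j_p(x) ∈ J_p(x), j_p(y) ∈ J_p(y): (i) ‖x + y‖^p ≥ ‖x‖^p + p⟨j_p(x), y⟩ + g(‖y‖); (ii) ⟨j_p(x) − j_p(y), x − y⟩ ≥ g(‖x − y‖). -/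
open NormedSpace


open Set

section XuAux

lemma xu_bregman_strict {p a b : ℝ} (hp : 1 < p) (ha : 0 ≤ a) (hb : 0 ≤ b) (hab : a ≠ b) :
    a ^ p + p * a ^ (p - 1) * (b - a) < b ^ p := by
  have hderiv : HasDerivAt (fun t : ℝ => t ^ p) (p * a ^ (p - 1)) a :=
    Real.hasDerivAt_rpow_const (Or.inr hp.le)
  rcases lt_or_gt_of_ne hab with hlt | hlt
  · have h := (strictConvexOn_rpow hp).lt_slope_of_hasDerivAt (mem_Ici.2 ha) (mem_Ici.2 hb)
      hlt hderiv
    rw [slope_def_field] at h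
    have := (lt_div_iff₀ (by linarith : (0:ℝ) < b - a)).1 h
    linarith
  · have h := (strictConvexOn_rpow hp).slope_lt_of_hasDerivAt (mem_Ici.2 hb) (mem_Ici.2 ha)
      hlt hderiv
    rw [slope_def_field] at h
    have h2 := (div_lt_iff₀ (by linarith : (0:ℝ) < a - b)).1 h
    nlinarith [h2]

lemma xu_bregman {p a b : ℝ} (hp : 1 < p) (ha : 0 ≤ a) (hb : 0 ≤ b) :
    a ^ p + p * a ^ (p - 1) * (b - a) ≤ b ^ p := by
  rcases eq_or_ne a b with rfl | hab
  · simp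
  · exact (xu_bregman_strict hp ha hb hab).le

lemma xu_rpow_succ {p a : ℝ} (hp : 1 < p) (ha : 0 ≤ a) : a * a ^ (p - 1) = a ^ p := by
  have h : a ^ ((1:ℝ) + (p - 1)) = a ^ (1:ℝ) * a ^ (p - 1) :=
    Real.rpow_add' ha (by intro h; rw [show (1:ℝ) + (p-1) = p by ring] at h; linarith)
  rw [show (1:ℝ) + (p-1) = p by ring] at h
  rw [h, Real.rpow_one]


variable {E : Type*} [NormedAddCommGroup E] [NormedSpace ℝ E]

lemma xu_D_nonneg {p : ℝ} (hp : 1 < p) (x u : E) (jx : StrongDual ℝ E)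
    (hjx1 : jx x = ‖x‖ * ‖jx‖) (hjx2 : ‖jx‖ = ‖x‖ ^ (p - 1)) :
    0 ≤ ‖u‖ ^ p - ‖x‖ ^ p - p * jx (u - x) := by
  set a := ‖x‖ with ha
  set b := ‖u‖ with hb
  have ha0 : 0 ≤ a := norm_nonneg x
  have hb0 : 0 ≤ b := norm_nonneg u
  have hA0 : 0 ≤ a ^ (p - 1) := Real.rpow_nonneg ha0 _
  have hju : jx u ≤ a ^ (p - 1) * b := by
    have h1 : jx u ≤ ‖jx u‖ := le_abs_self _
    have h2 : ‖jx u‖ ≤ ‖jx‖ * ‖u‖ := jx.le_opNorm u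
    rw [hjx2] at h2
    linarith
  have hjxx : jx x = a * a ^ (p - 1) := by rw [hjx1, hjx2]
  have hmap : jx (u - x) = jx u - jx x := map_sub jx u x
  have hbre := xu_bregman hp ha0 hb0
  have hap : a * a ^ (p - 1) = a ^ p := xu_rpow_succ hp ha0
  have hpj : p * jx (u - x) ≤ p * (a ^ (p - 1) * b) - p * (a * a ^ (p - 1)) := by
    rw [hmap, hjxx]
    have := mul_le_mul_of_nonneg_left hju (by linarith : (0:ℝ) ≤ p)
    linarith
  nlinarith [hbre, hpj, hap]

lemma xu_core [UniformConvexSpace E] {p : ℝ} (hp : 1 < p) {r : ℝ} (hr : 0 < r)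
    {ε : ℝ} (hε : 0 < ε) :
    ∃ c > 0, ∀ (x u : E) (jx : StrongDual ℝ E), ‖x‖ ≤ 2*r → ‖u‖ ≤ 2*r → ε ≤ ‖x - u‖ →
      jx x = ‖x‖ * ‖jx‖ → ‖jx‖ = ‖x‖ ^ (p - 1) →
      c ≤ ‖u‖ ^ p - ‖x‖ ^ p - p * jx (u - x) := by
  rcases lt_or_ge (4*r) ε with h4 | hε4
  · refine ⟨1, one_pos, fun x u jx hx hu hxu _ _ => absurd hxu (not_le.2 ?_)⟩
    calc ‖x - u‖ ≤ ‖x‖ + ‖u‖ := norm_sub_le x u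
    _ ≤ 4*r := by linarith
    _ < ε := h4
  obtain ⟨δ, hδ, hconv⟩ := exists_forall_closed_ball_dist_add_le_two_sub E
    (div_pos hε (by linarith : (0:ℝ) < 2*r))
  set Φ : ℝ × ℝ → ℝ := fun q =>
    q.2 ^ p + (p-1) * q.1 ^ p - p * q.1 ^ (p-1) * q.2
      + p * q.1 ^ (p-1) * max 0 ((q.1 + q.2) - (2-δ) * max q.1 q.2) with hΦdef
  have contp : Continuous fun t : ℝ => t ^ p := by
    rw [continuous_iff_continuousAt]
    exact fun x => Real.continuousAt_rpow_const x p (Or.inr (by linarith))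
  have contp1 : Continuous fun t : ℝ => t ^ (p-1) := by
    rw [continuous_iff_continuousAt]
    exact fun x => Real.continuousAt_rpow_const x (p-1) (Or.inr (by linarith))
  have c1 : Continuous fun q : ℝ×ℝ => q.1 ^ p := contp.comp continuous_fst
  have c2 : Continuous fun q : ℝ×ℝ => q.2 ^ p := contp.comp continuous_snd
  have c3 : Continuous fun q : ℝ×ℝ => q.1 ^ (p-1) := contp1.comp continuous_fst
  have c4 : Continuous fun q : ℝ×ℝ => max 0 ((q.1 + q.2) - (2-δ) * max q.1 q.2) :=
    continuous_const.max ((continuous_fst.add continuous_snd).sub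
      (continuous_const.mul (continuous_fst.max continuous_snd)))
  have hΦc : Continuous Φ :=
    ((c2.add (continuous_const.mul c1)).sub
      ((continuous_const.mul c3).mul continuous_snd)).add
      ((continuous_const.mul c3).mul c4)
  set K : Set (ℝ × ℝ) := (Icc (0:ℝ) (2*r) ×ˢ Icc (0:ℝ) (2*r)) ∩ {q | ε/2 ≤ max q.1 q.2}
    with hKdef
  have hKc : IsCompact K := (isCompact_Icc.prod isCompact_Icc).inter_right
    (isClosed_le continuous_const (continuous_fst.max continuous_snd))
  have hKne : K.Nonempty := by
    refine ⟨(2*r, 2*r), ?_⟩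
    simp only [hKdef, mem_inter_iff, mem_prod, mem_Icc, mem_setOf_eq, max_self]
    refine ⟨⟨⟨?_, ?_⟩, ?_, ?_⟩, ?_⟩ <;> linarith
  obtain ⟨q0, hq0K, hq0min⟩ := hKc.exists_isMinOn hKne hΦc.continuousOn
  refine ⟨Φ q0, ?_, ?_⟩
  · -- positivity of the minimum
    obtain ⟨⟨⟨ha0, har⟩, ⟨hb0, hbr⟩⟩, hmax⟩ := hq0K
    set a := q0.1
    set b := q0.2
    have hA0 : 0 ≤ a ^ (p-1) := Real.rpow_nonneg ha0 _
    have hM0 : 0 ≤ max 0 ((a + b) - (2-δ) * max a b) := le_max_left _ _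
    have hT0 : 0 ≤ p * a ^ (p-1) * max 0 ((a + b) - (2-δ) * max a b) := by positivity
    rcases eq_or_ne a b with hab | hab
    · -- a = b, so a = max ≥ ε/2 > 0 and the δ-term is positive
      have hamax : max a b = a := by rw [hab, max_self]
      have haε : ε/2 ≤ a := by
        have hmax' : ε/2 ≤ max a b := hmax
        rwa [hamax] at hmax'
      have ha' : 0 < a := lt_of_lt_of_le (by linarith) haε
      have hAp : 0 < a ^ (p-1) := Real.rpow_pos_of_pos ha' _
      have harg : (a + b) - (2-δ) * max a b = δ * a := by rw [hamax, ← hab]; ring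
      have hY : b ^ p + (p-1) * a ^ p - p * a ^ (p-1) * b = 0 := by
        rw [← hab]
        have := xu_rpow_succ hp ha0
        nlinarith [this]
      have : Φ q0 = p * a ^ (p-1) * (δ * a) := by
        show (b ^ p + (p-1) * a ^ p - p * a ^ (p-1) * b) + _ = _
        rw [harg, max_eq_right (by positivity : (0:ℝ) ≤ δ * a), hY]; ring
      rw [this]
      positivity
    · -- a ≠ b: strict Young term positive
      have hY : 0 < b ^ p + (p-1) * a ^ p - p * a ^ (p-1) * b := by
        have := xu_bregman_strict hp ha0 hb0 hab
        have hap := xu_rpow_succ hp ha0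
        nlinarith [this, hap]
      have : Φ q0 = (b ^ p + (p-1) * a ^ p - p * a ^ (p-1) * b)
          + p * a ^ (p-1) * max 0 ((a + b) - (2-δ) * max a b) := rfl
      rw [this]
      linarith
  · -- the main estimate
    intro x u jx hx hu hxu hjx1 hjx2
    set a := ‖x‖ with hadef
    set b := ‖u‖ with hbdef
    have ha0 : 0 ≤ a := norm_nonneg x
    have hb0 : 0 ≤ b := norm_nonneg u
    have hA0 : 0 ≤ a ^ (p-1) := Real.rpow_nonneg ha0 _
    set Rm := max a b with hRmdef
    have hRm2 : ε ≤ 2 * Rm := by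
      have : ‖x - u‖ ≤ a + b := norm_sub_le x u
      have h1 : a ≤ Rm := le_max_left _ _
      have h2 : b ≤ Rm := le_max_right _ _
      linarith
    have hRm0 : 0 < Rm := by linarith
    have hRmr : Rm ≤ 2*r := max_le hx hu
    set s := ‖x + u‖ with hsdef
    -- uniform convexity bound
    have hscd : s ≤ (2-δ) * Rm := by
      have hx' : ‖Rm⁻¹ • x‖ ≤ 1 := by
        rw [norm_smul, Real.norm_eq_abs, abs_of_nonneg (inv_nonneg.2 hRm0.le),
          inv_mul_le_iff₀ hRm0, mul_one]
        exact le_max_left _ _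
      have hu' : ‖Rm⁻¹ • u‖ ≤ 1 := by
        rw [norm_smul, Real.norm_eq_abs, abs_of_nonneg (inv_nonneg.2 hRm0.le),
          inv_mul_le_iff₀ hRm0, mul_one]
        exact le_max_right _ _
      have hd : ε / (2*r) ≤ ‖Rm⁻¹ • x - Rm⁻¹ • u‖ := by
        rw [← smul_sub, norm_smul, Real.norm_eq_abs, abs_of_nonneg (inv_nonneg.2 hRm0.le),
          inv_mul_eq_div]
        calc ε / (2*r) ≤ ε / Rm := div_le_div_of_nonneg_left hε.le hRm0 hRmr
        _ ≤ ‖x - u‖ / Rm := (div_le_div_iff_of_pos_right hRm0).2 hxu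
      have h := hconv hx' hu' hd
      rw [← smul_add, norm_smul, Real.norm_eq_abs, abs_of_nonneg (inv_nonneg.2 hRm0.le),
        inv_mul_le_iff₀ hRm0] at h
      calc s ≤ Rm * (2-δ) := h
      _ = (2-δ) * Rm := mul_comm _ _
    have hsab : s ≤ a + b := norm_add_le x u
    set M0 := max 0 ((a+b) - (2-δ) * Rm) with hM0def
    have hsM : s ≤ (a + b) - M0 := by
      rcases le_total ((a+b)) ((2-δ)*Rm) with h | h
      · rw [hM0def, max_eq_left (by linarith)]
        linarith
      · rw [hM0def, max_eq_right (by linarith)]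
        linarith
    have hju : jx u ≤ a ^ (p-1) * s - a * a ^ (p-1) := by
      have hsum : jx x + jx u = jx (x + u) := (map_add jx x u).symm
      have h2 : jx (x+u) ≤ ‖jx‖ * ‖x + u‖ := le_trans (le_abs_self _) (jx.le_opNorm _)
      rw [hjx2] at h2
      have hjxx : jx x = a * a ^ (p-1) := by rw [hjx1, hjx2]
      have : a ^ (p-1) * ‖x + u‖ = a ^ (p-1) * s := rfl
      linarith [h2, hsum]
    have hjxx : jx x = a * a ^ (p-1) := by rw [hjx1, hjx2]
    have hq : (a, b) ∈ K := by
      simp only [hKdef, mem_inter_iff, mem_prod, mem_Icc, mem_setOf_eq]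
      exact ⟨⟨⟨ha0, hx⟩, hb0, hu⟩, by linarith [hRm2]⟩
    have hmin : Φ q0 ≤ Φ (a, b) := isMinOn_iff.1 hq0min (a, b) hq
    have hΦab : Φ (a, b) = b ^ p + (p-1) * a ^ p - p * a ^ (p-1) * b
        + p * a ^ (p-1) * M0 := rfl
    have t1 : p * a ^ (p-1) * s ≤ p * a ^ (p-1) * ((a+b) - M0) :=
      mul_le_mul_of_nonneg_left hsM (by positivity)
    have t2 : p * jx u ≤ p * (a ^ (p-1) * s - a * a ^ (p-1)) :=
      mul_le_mul_of_nonneg_left hju (by linarith)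
    have hap' : p * (a * a ^ (p-1)) = p * a ^ p := by rw [xu_rpow_succ hp ha0]
    have hmap : jx (u - x) = jx u - jx x := map_sub jx u x
    rw [hmap, hjxx]
    rw [hΦab] at hmin
    linarith [hmin, t1, t2, hap']

end XuAux

/-- Xu's inequalities: in a real uniformly convex Banach space `E`, for `r > 0`
there is a continuous strictly increasing convex function `g : [0,∞) → [0,∞)` with
`g 0 = 0` such that for all `x, y` in the closed ball `B_r(0)` and all selections
`j_p x ∈ J_p x`, `j_p y ∈ J_p y` of the generalized duality mapping:
(i) `‖x + y‖^p ≥ ‖x‖^p + p ⟨j_p x, y⟩ + g ‖y‖` and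
(ii) `⟨j_p x - j_p y, x - y⟩ ≥ g ‖x - y‖`. -/
theorem stmt_13 {E : Type*} [NormedAddCommGroup E] [NormedSpace ℝ E] [CompleteSpace E]
    [UniformConvexSpace E]
    (p : ℝ) (hp : 1 < p) (r : ℝ) (hr : 0 < r) :
    ∃ g : ℝ → ℝ,
      ContinuousOn g (Set.Ici 0) ∧
      StrictMonoOn g (Set.Ici 0) ∧
      ConvexOn ℝ (Set.Ici 0) g ∧
      (∀ t : ℝ, 0 ≤ t → 0 ≤ g t) ∧
      g 0 = 0 ∧
      ∀ x y : E, ‖x‖ ≤ r → ‖y‖ ≤ r →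
        ∀ jx ∈ {f : StrongDual ℝ E | f x = ‖x‖ * ‖f‖ ∧ ‖f‖ = ‖x‖ ^ (p - 1)},
        ∀ jy ∈ {f : StrongDual ℝ E | f y = ‖y‖ * ‖f‖ ∧ ‖f‖ = ‖y‖ ^ (p - 1)},
          ‖x + y‖ ^ p ≥ ‖x‖ ^ p + p * jx y + g ‖y‖ ∧
          (jx - jy) (x - y) ≥ g ‖x - y‖ := by
  have hp0 : (0:ℝ) < p := by linarith
  rcases subsingleton_or_nontrivial E with hE | hE
  · refine ⟨fun t => t, continuous_id.continuousOn, fun a _ b _ h => h,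
      convexOn_id (convex_Ici 0), fun t ht => ht, rfl, ?_⟩
    intro x y hx hy jx hjx jy hjy
    have hx0 : x = 0 := Subsingleton.elim x 0
    have hy0 : y = 0 := Subsingleton.elim y 0
    subst hx0 hy0
    constructor
    · simp [Real.zero_rpow hp0.ne']
    · simp
  -- nontrivial case
  set S : ℝ → Set ℝ := fun ε => {d | ∃ x u : E, ∃ jx : StrongDual ℝ E,
    ‖x‖ ≤ 2*r ∧ ‖u‖ ≤ 2*r ∧ ε ≤ ‖x - u‖ ∧ jx x = ‖x‖ * ‖jx‖ ∧ ‖jx‖ = ‖x‖ ^ (p-1) ∧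
    d = ‖u‖ ^ p - ‖x‖ ^ p - p * jx (u - x)} with hSdef
  have hSnonneg : ∀ ε, ∀ d ∈ S ε, 0 ≤ d := by
    rintro ε d ⟨x, u, jx, -, -, -, h1, h2, rfl⟩
    exact xu_D_nonneg hp x u jx h1 h2
  have hSbdd : ∀ ε, BddBelow (S ε) := fun ε => ⟨0, fun d hd => hSnonneg ε d hd⟩
  have hSne : ∀ ε ≤ 4*r, (S ε).Nonempty := by
    intro ε hε4
    obtain ⟨e, he⟩ := exists_norm_eq E (le_of_lt (by linarith : (0:ℝ) < 2*r))
    have he0 : e ≠ 0 := by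
      intro h; rw [h, norm_zero] at he; linarith
    obtain ⟨f, hf1, hf2⟩ := exists_dual_vector ℝ e (norm_ne_zero_iff.2 he0)
    set jx : StrongDual ℝ E := (‖e‖ ^ (p-1) : ℝ) • f with hjxdef
    have hjxn : ‖jx‖ = ‖e‖ ^ (p-1) := by
      rw [hjxdef, norm_smul, Real.norm_eq_abs, abs_of_nonneg (Real.rpow_nonneg (norm_nonneg e) _),
        hf1, mul_one]
    refine ⟨_, e, -e, jx, le_of_eq he, by rw [norm_neg]; exact le_of_eq he, ?_, ?_, hjxn, rfl⟩
    · rw [sub_neg_eq_add, ← two_smul ℝ e, norm_smul, Real.norm_eq_abs, he]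
      norm_num; linarith
    · have hfe : f e = ‖e‖ := by exact_mod_cast hf2
      rw [hjxdef]
      simp only [ContinuousLinearMap.smul_apply, hfe, smul_eq_mul]
      rw [hjxn]
      ring
  set h : ℝ → ℝ := fun t => sInf (S (min t (4*r))) with hhdef
  have hne' : ∀ t : ℝ, (S (min t (4*r))).Nonempty := fun t => hSne _ (min_le_right _ _)
  have hposh : ∀ t : ℝ, 0 < t → 0 < h t := by
    intro t ht
    obtain ⟨c, hc, hcore⟩ := xu_core (E := E) hp hr
      (show (0:ℝ) < min t (4*r) from lt_min ht (by linarith))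
    refine lt_of_lt_of_le hc (le_csInf (hne' t) ?_)
    rintro d ⟨x, u, jx, h1, h2, h3, h4, h5, rfl⟩
    exact hcore x u jx h1 h2 h3 h4 h5
  have hmono : Monotone h := by
    intro t1 t2 h12
    apply csInf_le_csInf (hSbdd _) (hne' t2)
    rintro d ⟨x, u, jx, h1, h2, h3, h4, h5, rfl⟩
    exact ⟨x, u, jx, h1, h2, le_trans (min_le_min h12 (le_refl _)) h3, h4, h5, rfl⟩
  have hnn : ∀ t, 0 ≤ h t := fun t => le_csInf (hne' t) (fun d hd => hSnonneg _ d hd)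
  set C : ℝ := (4*r+1)*p with hCdef
  have hC : 0 < C := by positivity
  set w : ℝ → ℝ := fun s => min (h s) s / C with hwdef
  have hwmono : Monotone w := (hmono.min monotone_id).div_const hC.le
  have hwint : ∀ a b : ℝ, IntervalIntegrable w MeasureTheory.volume a b :=
    fun a b => hwmono.intervalIntegrable
  have hwnn : ∀ s : ℝ, 0 ≤ s → 0 ≤ w s :=
    fun s hs => div_nonneg (le_min (hnn s) hs) hC.le
  have hwpos : ∀ s : ℝ, 0 < s → 0 < w s :=
    fun s hs => div_pos (lt_min (hposh s hs) hs) hC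
  set g : ℝ → ℝ := fun t => ∫ s in (0:ℝ)..t, w s with hgdef
  have hgcont : Continuous g := intervalIntegral.continuous_primitive hwint 0
  have hg0 : g 0 = 0 := intervalIntegral.integral_same
  have hgnn : ∀ t : ℝ, 0 ≤ t → 0 ≤ g t :=
    fun t ht => intervalIntegral.integral_nonneg ht (fun u hu => hwnn u hu.1)
  have hdiff : ∀ a b : ℝ, g b - g a = ∫ s in a..b, w s := by
    intro a b
    have h1 := intervalIntegral.integral_add_adjacent_intervals (hwint 0 a) (hwint a b)
    show (∫ s in (0:ℝ)..b, w s) - (∫ s in (0:ℝ)..a, w s) = _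
    linarith [h1]
  have hchunk_lb : ∀ a b : ℝ, a ≤ b → (b - a) * w a ≤ ∫ s in a..b, w s := by
    intro a b hab
    have h1 : (∫ _ in a..b, w a) ≤ ∫ s in a..b, w s :=
      intervalIntegral.integral_mono_on hab intervalIntegrable_const (hwint a b)
        (fun s hs => hwmono hs.1)
    rwa [intervalIntegral.integral_const, smul_eq_mul] at h1
  have hchunk_ub : ∀ a b : ℝ, a ≤ b → (∫ s in a..b, w s) ≤ (b - a) * w b := by
    intro a b hab
    have h1 : (∫ s in a..b, w s) ≤ ∫ _ in a..b, w b :=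
      intervalIntegral.integral_mono_on hab (hwint a b) intervalIntegrable_const
        (fun s hs => hwmono hs.2)
    rwa [intervalIntegral.integral_const, smul_eq_mul] at h1
  have hgsm : StrictMonoOn g (Ici 0) := by
    intro a ha b hb hab
    have hd := hdiff a b
    set m := (a+b)/2 with hmdef
    have ham : a ≤ m := by rw [hmdef]; linarith
    have hmb : m ≤ b := by rw [hmdef]; linarith
    have hm0 : 0 < m := by
      have : (0:ℝ) ≤ a := ha
      rw [hmdef]; linarith [lt_of_le_of_lt this hab]
    have hsplit := intervalIntegral.integral_add_adjacent_intervals (hwint a m) (hwint m b)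
    have h1 : (0:ℝ) ≤ ∫ s in a..m, w s :=
      intervalIntegral.integral_nonneg ham (fun u hu => hwnn u (le_trans ha hu.1))
    have h2 : (b - m) * w m ≤ ∫ s in m..b, w s := hchunk_lb m b hmb
    have h3 : 0 < (b - m) * w m := mul_pos (by rw [hmdef]; linarith) (hwpos m hm0)
    have : 0 < g b - g a := by rw [hd, ← hsplit]; linarith
    linarith
  have hgconv : ConvexOn ℝ (Ici 0) g := by
    apply convexOn_of_slope_mono_adjacent (convex_Ici 0)
    intro x y z _ _ hxy hyz
    have h1 : g y - g x ≤ (y - x) * w y := by rw [hdiff x y]; exact hchunk_ub x y hxy.le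
    have h2 : (z - y) * w y ≤ g z - g y := by rw [hdiff y z]; exact hchunk_lb y z hyz.le
    have hyx : (0:ℝ) < y - x := by linarith
    have hzy : (0:ℝ) < z - y := by linarith
    calc (g y - g x) / (y - x) ≤ w y := by
          rw [div_le_iff₀ hyx]; linarith [h1]
    _ ≤ (g z - g y) / (z - y) := by
          rw [le_div_iff₀ hzy]; linarith [h2]
  have hkey : ∀ t : ℝ, 0 ≤ t → t ≤ 4*r → p * g t ≤ h t := by
    intro t ht0 ht4
    have h1 : g t ≤ (t - 0) * w t := hchunk_ub 0 t ht0
    rw [sub_zero] at h1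
    have e1 : w t * C ≤ h t := by
      rw [hwdef]
      simp only
      rw [div_mul_cancel₀ _ hC.ne']
      exact min_le_left _ _
    have e2 : p * g t ≤ p * (t * w t) := mul_le_mul_of_nonneg_left h1 hp0.le
    have e3 : p * (t * w t) ≤ p * ((4*r) * w t) :=
      mul_le_mul_of_nonneg_left (mul_le_mul_of_nonneg_right ht4 (hwnn t ht0)) hp0.le
    have e4 : p * ((4*r) * w t) ≤ w t * C := by
      rw [hCdef]
      nlinarith [mul_nonneg (hwnn t ht0) hp0.le]
    linarith
  refine ⟨g, hgcont.continuousOn, hgsm, hgconv, hgnn, hg0, ?_⟩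
  intro x y hx hy jx hjx jy hjy
  obtain ⟨hjx1, hjx2⟩ := hjx
  obtain ⟨hjy1, hjy2⟩ := hjy
  constructor
  · -- inequality (i)
    have hmem : (‖x+y‖ ^ p - ‖x‖ ^ p - p * jx ((x+y) - x)) ∈ S (min ‖y‖ (4*r)) := by
      refine ⟨x, x+y, jx, by linarith, ?_, ?_, hjx1, hjx2, rfl⟩
      · calc ‖x + y‖ ≤ ‖x‖ + ‖y‖ := norm_add_le x y
        _ ≤ 2*r := by linarith
      · have hxy : x - (x + y) = -y := by abel
        rw [hxy, norm_neg]
        exact min_le_left _ _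
    have hD : h ‖y‖ ≤ ‖x+y‖ ^ p - ‖x‖ ^ p - p * jx ((x+y) - x) := csInf_le (hSbdd _) hmem
    have hk := hkey ‖y‖ (norm_nonneg y) (by linarith)
    have hgle : g ‖y‖ ≤ p * g ‖y‖ := by nlinarith [hgnn ‖y‖ (norm_nonneg y)]
    have hyy : (x + y) - x = y := by abel
    rw [hyy] at hD
    linarith
  · -- inequality (ii)
    have hmem : (‖y‖ ^ p - ‖x‖ ^ p - p * jx (y - x)) ∈ S (min ‖x - y‖ (4*r)) :=
      ⟨x, y, jx, by linarith, by linarith, min_le_left _ _, hjx1, hjx2, rfl⟩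
    have hD2 : h ‖x - y‖ ≤ ‖y‖ ^ p - ‖x‖ ^ p - p * jx (y - x) := csInf_le (hSbdd _) hmem
    have hD3 : 0 ≤ ‖x‖ ^ p - ‖y‖ ^ p - p * jy (x - y) := xu_D_nonneg hp y x jy hjy1 hjy2
    have hk := hkey ‖x - y‖ (norm_nonneg _)
      (by linarith [norm_sub_le x y])
    have hneg : jx (y - x) = -(jx (x - y)) := by
      rw [← map_neg]; congr 1; abel
    rw [hneg] at hD2
    have happ : (jx - jy) (x - y) = jx (x - y) - jy (x - y) := rfl
    rw [ge_iff_le, ← mul_le_mul_iff_right₀ hp0, happ]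
    linarith
end

section
/- Let E be a smooth uniformly convex real Banach space with normalized duality mapping J : E → E* satisfying ⟨J x, x⟩ = ‖x‖² and ‖J x‖ = ‖x‖ for all x ∈ E, and define φ(x, y) := ‖x‖² − 2⟨J y, x⟩ + ‖y‖². Let {x_n} and {y_n} be two sequences in E. If either {x_n} or {y_n} is bounded and φ(x_n, y_n) → 0 as n → ∞, then ‖x_n − y_n‖ → 0 as n → ∞. -/
open NormedSpace Filter

set_option maxHeartbeats 1000000 in
/-- Kamimura–Takahashi: in a smooth uniformly convex real Banach space `E`, with
`φ (x, y) := ‖x‖² - 2 ⟨J y, x⟩ + ‖y‖²`, if `{x_n}` or `{y_n}` is bounded and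
`φ (x_n, y_n) → 0`, then `‖x_n - y_n‖ → 0`. -/
theorem stmt_15 {E : Type*} [NormedAddCommGroup E] [NormedSpace ℝ E] [CompleteSpace E]
    [UniformConvexSpace E]
    (J : E → StrongDual ℝ E)
    (hJ1 : ∀ x : E, J x x = ‖x‖ ^ 2)
    (hJ2 : ∀ x : E, ‖J x‖ = ‖x‖)
    (x y : ℕ → E)
    (hbdd : Bornology.IsBounded (Set.range x) ∨ Bornology.IsBounded (Set.range y))
    (hφ : Filter.Tendsto (fun n => ‖x n‖ ^ 2 - 2 * J (y n) (x n) + ‖y n‖ ^ 2)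
      Filter.atTop (nhds 0)) :
    Filter.Tendsto (fun n => ‖x n - y n‖) Filter.atTop (nhds 0) := by
  set φ : ℕ → ℝ := fun n => ‖x n‖ ^ 2 - 2 * J (y n) (x n) + ‖y n‖ ^ 2 with hφdef
  -- alignment gap is nonnegative
  have hη : ∀ n, 0 ≤ ‖x n‖ * ‖y n‖ - J (y n) (x n) := by
    intro n
    have h := (J (y n)).le_opNorm (x n)
    rw [hJ2] at h
    have h2 : J (y n) (x n) ≤ ‖y n‖ * ‖x n‖ :=
      le_trans (le_abs_self _) (by simpa [Real.norm_eq_abs] using h)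
    nlinarith [h2]
  have hφval : ∀ n, φ n = ‖x n‖ ^ 2 - 2 * J (y n) (x n) + ‖y n‖ ^ 2 := fun n => rfl
  clear_value φ
  clear hφdef
  have hφnn : ∀ n, 0 ≤ φ n := fun n => by
    nlinarith [hη n, sq_nonneg (‖x n‖ - ‖y n‖), hφval n]
  have hd : ∀ n, |‖x n‖ - ‖y n‖| ≤ Real.sqrt (φ n) := by
    intro n
    rw [← Real.sqrt_sq_eq_abs]
    exact Real.sqrt_le_sqrt (by nlinarith [hη n, hφval n])
  -- both sequences are bounded
  obtain ⟨B, hB⟩ : ∃ B, ∀ n, φ n ≤ B := by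
    obtain ⟨B, hB⟩ := hφ.bddAbove_range
    exact ⟨B, fun n => hB ⟨n, rfl⟩⟩
  have hsB : ∀ n, |‖x n‖ - ‖y n‖| ≤ Real.sqrt B := fun n =>
    (hd n).trans (Real.sqrt_le_sqrt (hB n))
  obtain ⟨C, hC⟩ : ∃ C, (∀ n, ‖x n‖ ≤ C) ∨ (∀ n, ‖y n‖ ≤ C) := by
    rcases hbdd with h | h
    · obtain ⟨C, hC⟩ := h.exists_norm_le
      exact ⟨C, Or.inl fun n => hC _ ⟨n, rfl⟩⟩
    · obtain ⟨C, hC⟩ := h.exists_norm_le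
      exact ⟨C, Or.inr fun n => hC _ ⟨n, rfl⟩⟩
  set M : ℝ := max (C + Real.sqrt B) 1 with hMdef
  have hM1 : (1:ℝ) ≤ M := le_max_right _ _
  have hCM : C + Real.sqrt B ≤ M := le_max_left _ _
  have hM0 : (0:ℝ) < M := lt_of_lt_of_le one_pos hM1
  have hMx : ∀ n, ‖x n‖ ≤ M ∧ ‖y n‖ ≤ M := by
    intro n
    have habs := hsB n
    have h1 : ‖x n‖ - ‖y n‖ ≤ Real.sqrt B := (le_abs_self _).trans habs
    have h2 : ‖y n‖ - ‖x n‖ ≤ Real.sqrt B :=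
      le_trans (le_trans (le_abs_self _) (abs_sub_comm (‖y n‖) (‖x n‖)).le) habs
    have hs0 : 0 ≤ Real.sqrt B := Real.sqrt_nonneg _
    rcases hC with h | h
    · exact ⟨by linarith [h n], by linarith [h n]⟩
    · exact ⟨by linarith [h n], by linarith [h n]⟩
  -- main ε argument
  clear_value M
  clear hMdef
  rw [NormedAddCommGroup.tendsto_nhds_zero]
  intro ε hε
  simp only [Real.norm_eq_abs, abs_norm]
  obtain ⟨δ, hδ, hconv⟩ := exists_forall_closed_ball_dist_add_le_two_sub E
    (div_pos hε hM0)
  set m : ℝ := min (ε / 3) (ε * δ / 6) with hmdef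
  have hm0 : 0 < m := lt_min (by positivity) (by positivity)
  set θ : ℝ := min (m ^ 2) (ε ^ 2 * δ / 9) with hθdef
  have hθ0 : 0 < θ := lt_min (by positivity) (by positivity)
  have hθm : θ ≤ m ^ 2 := min_le_left _ _
  have hθε : θ ≤ ε ^ 2 * δ / 9 := min_le_right _ _
  have hm1 : m ≤ ε / 3 := min_le_left _ _
  have hm2 : m ≤ ε * δ / 6 := min_le_right _ _
  clear_value m θ
  clear hmdef hθdef
  filter_upwards [hφ.eventually (gt_mem_nhds hθ0)] with n hn
  -- per-n quantities
  set a := ‖x n‖ with hadef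
  set b := ‖y n‖ with hbdef
  have ha0 : 0 ≤ a := norm_nonneg _
  have hb0 : 0 ≤ b := norm_nonneg _
  have haM : a ≤ M := (hMx n).1
  have hbM' : b ≤ M := (hMx n).2
  have hJb : J (y n) (y n) = b ^ 2 := by rw [hJ1]
  have hJnb : ‖J (y n)‖ = b := hJ2 _
  have hφn' : φ n = a ^ 2 - 2 * J (y n) (x n) + b ^ 2 := hφval n
  clear_value a b
  have hdn : |a - b| < m := by
    calc |a - b| ≤ Real.sqrt (φ n) := by rw [hadef, hbdef]; exact hd n
      _ < Real.sqrt θ := Real.sqrt_lt_sqrt (hφnn n) hn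
      _ ≤ Real.sqrt (m ^ 2) := Real.sqrt_le_sqrt hθm
      _ = m := Real.sqrt_sq hm0.le
  have hdn1 : |a - b| < ε / 3 := hdn.trans_le hm1
  have hdn2 : |a - b| < ε * δ / 6 := hdn.trans_le hm2
  have hηn : a * b - J (y n) (x n) < ε ^ 2 * δ / 18 := by
    have h1 : 2 * (a * b - J (y n) (x n)) ≤ φ n := by
      nlinarith [sq_nonneg (a - b), hφn']
    have h2 : φ n < ε ^ 2 * δ / 9 := hn.trans_le hθε
    linarith
  have habs1 : a - b ≤ |a - b| := le_abs_self _
  have habs2 : b - a ≤ |a - b| := by rw [abs_sub_comm]; exact le_abs_self _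
  rcases lt_or_ge b (ε / 3) with hyb | hyb
  · -- small case
    calc ‖x n - y n‖ ≤ a + b := by rw [hadef, hbdef]; exact norm_sub_le _ _
      _ < ε := by linarith
  · -- uniform convexity case
    by_contra hcon
    push_neg at hcon
    have hcon' : ε ≤ ‖x n - y n‖ := hcon
    set r : ℝ := max a b with hrdef
    have hra : a ≤ r := le_max_left _ _
    have hrb : b ≤ r := le_max_right _ _
    have hr0 : 0 < r := lt_of_lt_of_le (by linarith) hrb
    have hrM : r ≤ M := max_le haM hbM'
    have hr2 : 2 * r ≤ a + b + |a - b| := by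
      have h1 : r ≤ (a + b + |a - b|) / 2 := max_le (by linarith) (by linarith)
      linarith
    have hu : ‖r⁻¹ • x n‖ ≤ 1 := by
      rw [norm_smul, Real.norm_eq_abs, abs_of_pos (inv_pos.2 hr0),
        inv_mul_le_iff₀ hr0, mul_one, ← hadef]
      exact hra
    have hv : ‖r⁻¹ • y n‖ ≤ 1 := by
      rw [norm_smul, Real.norm_eq_abs, abs_of_pos (inv_pos.2 hr0),
        inv_mul_le_iff₀ hr0, mul_one, ← hbdef]
      exact hrb
    have hdist : ε / M ≤ ‖r⁻¹ • x n - r⁻¹ • y n‖ := by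
      rw [← smul_sub, norm_smul, Real.norm_eq_abs, abs_of_pos (inv_pos.2 hr0),
        inv_mul_eq_div]
      calc ε / M ≤ ε / r := by gcongr
        _ ≤ ‖x n - y n‖ / r := by gcongr
    have hsum : ‖r⁻¹ • x n + r⁻¹ • y n‖ ≤ 2 - δ := hconv hu hv hdist
    clear_value r
    clear hrdef
    have hup : ‖x n + y n‖ ≤ r * (2 - δ) := by
      have : ‖r⁻¹ • x n + r⁻¹ • y n‖ = r⁻¹ * ‖x n + y n‖ := by
        rw [← smul_add, norm_smul, Real.norm_eq_abs, abs_of_pos (inv_pos.2 hr0)]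
      rw [this] at hsum
      calc ‖x n + y n‖ = r * (r⁻¹ * ‖x n + y n‖) := by field_simp
        _ ≤ r * (2 - δ) := by gcongr
    -- lower bound
    have hlow : b * ‖x n + y n‖ ≥ J (y n) (x n) + b ^ 2 := by
      have h1 : J (y n) (x n + y n) = J (y n) (x n) + b ^ 2 := by
        rw [map_add, hJb]
      have h2 : J (y n) (x n + y n) ≤ ‖J (y n)‖ * ‖x n + y n‖ :=
        le_trans (le_abs_self _) (by simpa [Real.norm_eq_abs] using (J (y n)).le_opNorm (x n + y n))
      rw [hJnb] at h2
      linarith [h1 ▸ h2]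
    -- combine
    have hbM : b * ‖x n + y n‖ ≤ b * (r * (2 - δ)) :=
      mul_le_mul_of_nonneg_left hup hb0
    have h_2br : b * (2 * r) ≤ b * (a + b + |a - b|) :=
      mul_le_mul_of_nonneg_left hr2 hb0
    have key1 : b * r * δ < b * |a - b| + ε ^ 2 * δ / 18 := by
      linarith [hbM, hlow, hηn, h_2br]
    have h_brδ : b * b * δ ≤ b * r * δ :=
      mul_le_mul_of_nonneg_right (mul_le_mul_of_nonneg_left hrb hb0) hδ.le
    have h_bd : b * |a - b| ≤ b * (ε * δ / 6) :=
      mul_le_mul_of_nonneg_left hdn2.le hb0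
    have h_eps : ε ≤ 3 * b := by linarith
    have hsq : ε ^ 2 * δ ≤ 9 * (b * b) * δ := by
      have h0 : ε * ε ≤ (3 * b) * (3 * b) :=
        mul_le_mul h_eps h_eps hε.le (by linarith)
      have h : ε ^ 2 ≤ 9 * (b * b) := by linarith [h0, sq ε ▸ h0]
      exact mul_le_mul_of_nonneg_right h hδ.le
    have hbe : b * (ε * δ / 6) ≤ b * (b * δ / 2) := by
      have h3 : ε * δ ≤ 3 * b * δ := by
        have := mul_le_mul_of_nonneg_right h_eps hδ.le
        linarith
      exact mul_le_mul_of_nonneg_left (by linarith) hb0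
    have hb' : (0:ℝ) < b := lt_of_lt_of_le (by linarith) hyb
    have hbδ : 0 < b * b * δ := mul_pos (mul_pos hb' hb') hδ
    linarith [key1, h_brδ, h_bd, h_eps, hsq, hbe, hbδ]
end
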